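/- Let T be a closed, densely defined antilinear operator on a complex Hilbert space H with T = T^{-1} (an involution), and let T = J A^{-1/2} be its polar decomposition with J antiunitary and A^{-1/2} positive self-adjoint injective. Then J is an involution (J² = 1) and J A J = A^{-1}. -/

import Mathlib

open scoped ComplexOrder in
set_option synthInstance.maxHeartbeats 1000000 in
/-- Uniqueness of positive square roots of bounded operators. -/
theorem stmt_17_sqrt_unique {H : Type*} [NormedAddCommGroup H] [InnerProductSpace ℂ H]
    [CompleteSpace H]
    (R P : H →L[ℂ] H) (hR : 0 ≤ R) (hP : 0 ≤ P) (h : R ^ 2 = P ^ 2) : R = P := by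
  calc R = CFC.sqrt (R ^ 2) := (CFC.sqrt_sq R hR).symm
  _ = CFC.sqrt (P ^ 2) := by rw [h]
  _ = P := CFC.sqrt_sq P hP

/-- Antilinear isometries preserve the inner ℂ product up to conjugation. -/
theorem stmt_17_antiunitary_inner {H : Type*} [NormedAddCommGroup H] [InnerProductSpace ℂ H]
    (J : H → H)
    (hJadd : ∀ x y : H, J (x + y) = J x + J y)
    (hJsmul : ∀ (c : ℂ) (x : H), J (c • x) = (starRingEnd ℂ) c • J x)
    (hJiso : ∀ x : H, ‖J x‖ = ‖x‖) (x y : H) :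
    (inner ℂ (J x) (J y) : ℂ) = inner ℂ y x := by
  have hJsub : ∀ a b : H, J (a - b) = J a - J b := by
    intro a b
    have h1 : J ((-1 : ℂ) • b) = (-1 : ℂ) • J b := by
      rw [hJsmul]; norm_num
    rw [sub_eq_add_neg, ← neg_one_smul ℂ b, hJadd, h1, neg_one_smul, ← sub_eq_add_neg]
  have n1 : ‖J x + J y‖ = ‖y + x‖ := by rw [← hJadd, hJiso, add_comm]
  have n2 : ‖J x - J y‖ = ‖y - x‖ := by rw [← hJsub, hJiso, norm_sub_rev]
  have e3 : J (x + Complex.I • y) = J x - Complex.I • J y := by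
    rw [hJadd, hJsmul]
    simp [Complex.conj_I, sub_eq_add_neg, neg_smul]
  have e4 : J (x - Complex.I • y) = J x + Complex.I • J y := by
    rw [hJsub, hJsmul]
    simp [Complex.conj_I, sub_eq_add_neg, neg_smul]
  have n3 : ‖J x - Complex.I • J y‖ = ‖y - Complex.I • x‖ := by
    have hv : y - Complex.I • x = (-Complex.I) • (x + Complex.I • y) := by
      rw [smul_add, smul_smul]
      simp [neg_smul, sub_eq_add_neg, add_comm]
    rw [← e3, hJiso, hv, norm_smul]
    simp
  have n4 : ‖J x + Complex.I • J y‖ = ‖y + Complex.I • x‖ := by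
    have hv : y + Complex.I • x = Complex.I • (x - Complex.I • y) := by
      rw [smul_sub, smul_smul]
      simp [add_comm]
    rw [← e4, hJiso, hv, norm_smul]
    simp
  rw [inner_eq_sum_norm_sq_div_four, inner_eq_sum_norm_sq_div_four]
  have hI : (RCLike.I : ℂ) = Complex.I := rfl
  rw [hI, n1, n2, n3, n4]

/-- bounded-operator version: Let `T = J ∘ R` be an antilinear involution on a
complex Hilbert space, where `R = A^{-1/2}` is a bounded positive self-adjoint operator with
bounded inverse and `J` is antiunitary (the polar decomposition of `T`). Then `J² = 1` and
`J A J = A⁻¹`, where `A = R⁻²` (so `A⁻¹ = R²`). -/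
theorem stmt_17
    {H : Type*} [NormedAddCommGroup H] [InnerProductSpace ℂ H] [CompleteSpace H]
    (R Rinv : H →L[ℂ] H) (J : H → H)
    (hR : IsSelfAdjoint R)
    (hRpos : ∀ x : H, 0 ≤ (inner ℂ (R x) x : ℂ).re)
    (hRinv : R * Rinv = 1) (hRinv' : Rinv * R = 1)
    (hJadd : ∀ x y : H, J (x + y) = J x + J y)
    (hJsmul : ∀ (c : ℂ) (x : H), J (c • x) = (starRingEnd ℂ) c • J x)
    (hJiso : ∀ x : H, ‖J x‖ = ‖x‖)
    (hJbij : Function.Bijective J)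
    (hT : ∀ x : H, J (R (J (R x))) = x) :
    (∀ x : H, J (J x) = x) ∧ (∀ x : H, J ((Rinv ^ 2) (J x)) = (R ^ 2) x) := by
  classical
  have hJinner := stmt_17_antiunitary_inner J hJadd hJsmul hJiso
  have hJinj : Function.Injective J := hJbij.1
  -- the inverse K of J
  set e : H ≃ H := Equiv.ofBijective J hJbij with he
  set K : H → H := ⇑e.symm with hK
  have hJK : ∀ x, J (K x) = x := fun x => e.apply_symm_apply x
  have hKJ : ∀ x, K (J x) = x := fun x => e.symm_apply_apply x
  have hKadd : ∀ x y, K (x + y) = K x + K y := fun x y =>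
    hJinj (by rw [hJK, hJadd, hJK, hJK])
  have hKsmul : ∀ (c : ℂ) x, K (c • x) = (starRingEnd ℂ) c • K x := fun c x =>
    hJinj (by rw [hJK, hJsmul, hJK, Complex.conj_conj])
  have hKiso : ∀ x, ‖K x‖ = ‖x‖ := fun x => by rw [← hJiso (K x), hJK]
  -- applications of the inverse hypotheses
  have hRRinv : ∀ x, R (Rinv x) = x := fun x => by
    have := DFunLike.congr_fun hRinv x
    simpa using this
  have hRinvR : ∀ x, Rinv (R x) = x := fun x => by
    have := DFunLike.congr_fun hRinv' x
    simpa using this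
  -- Rinv is self-adjoint
  have hRstar : star R = R := hR
  have h1 : star Rinv * R = 1 := by
    calc star Rinv * R = star Rinv * star R := by rw [hRstar]
    _ = star (R * Rinv) := (star_mul R Rinv).symm
    _ = 1 := by rw [hRinv, star_one]
  have hRinvSA : IsSelfAdjoint Rinv := by
    show star Rinv = Rinv
    calc star Rinv = star Rinv * (R * Rinv) := by rw [hRinv, mul_one]
    _ = (star Rinv * R) * Rinv := by rw [mul_assoc]
    _ = Rinv := by rw [h1, one_mul]
  have hRsym : ∀ x y : H, (inner ℂ (R x) y : ℂ) = inner ℂ x (R y) := fun x y =>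
    hR.isSymmetric x y
  have hRinvSym : ∀ x y : H, (inner ℂ (Rinv x) y : ℂ) = inner ℂ x (Rinv y) := fun x y =>
    hRinvSA.isSymmetric x y
  -- T = J ∘ R is injective and equals Rinv ∘ K
  have hTinj : ∀ a b : H, J (R a) = J (R b) → a = b := fun a b h => by
    have ha := hT a
    rw [h] at ha
    exact ha.symm.trans (hT b)
  have hTT : ∀ x, J (R x) = Rinv (K x) := by
    intro x
    apply hTinj
    rw [hT x, hRRinv, hJK]
  -- the positive operator P = J ∘ Rinv ∘ K
  have hnorm : ∀ x, ‖R x‖ = ‖Rinv (K x)‖ := fun x => by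
    rw [← hTT x, hJiso]
  let Pl : H →ₗ[ℂ] H :=
    { toFun := fun x => J (Rinv (K x))
      map_add' := fun x y => by
        show J (Rinv (K (x + y))) = J (Rinv (K x)) + J (Rinv (K y))
        rw [hKadd, map_add, hJadd]
      map_smul' := fun c x => by
        show J (Rinv (K (c • x))) = (RingHom.id ℂ) c • J (Rinv (K x))
        rw [hKsmul, map_smul, hJsmul, Complex.conj_conj]; rfl }
  have Pl_bound : ∀ x, ‖Pl x‖ ≤ ‖Rinv‖ * ‖x‖ := by
    intro x
    show ‖J (Rinv (K x))‖ ≤ ‖Rinv‖ * ‖x‖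
    rw [hJiso, ← hKiso x]
    exact Rinv.le_opNorm (K x)
  let P : H →L[ℂ] H := Pl.mkContinuous ‖Rinv‖ Pl_bound
  have hPapp : ∀ x, P x = J (Rinv (K x)) := fun x => rfl
  have hPnorm : ∀ x, ‖P x‖ = ‖R x‖ := fun x => by
    rw [hPapp, hJiso, hnorm]
  -- P is symmetric and positive
  have hPsym : ∀ x y : H, (inner ℂ (P x) y : ℂ) = inner ℂ x (P y) := by
    intro x y
    rw [hPapp, hPapp]
    calc (inner ℂ (J (Rinv (K x))) y : ℂ)
        = inner ℂ (J (Rinv (K x))) (J (K y)) := by rw [hJK]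
    _ = inner ℂ (K y) (Rinv (K x)) := hJinner _ _
    _ = inner ℂ (Rinv (K y)) (K x) := (hRinvSym (K y) (K x)).symm
    _ = inner ℂ (J (K x)) (J (Rinv (K y))) := (hJinner (K x) (Rinv (K y))).symm
    _ = inner ℂ x (J (Rinv (K y))) := by rw [hJK]
  have hPSA : IsSelfAdjoint P :=
    ContinuousLinearMap.isSelfAdjoint_iff_isSymmetric.mpr fun x y => hPsym x y
  have hRinvPos : ∀ z : H, 0 ≤ (inner ℂ (Rinv z) z : ℂ).re := by
    intro z
    have : (inner ℂ (Rinv z) z : ℂ) = inner ℂ (Rinv z) (R (Rinv z)) := by rw [hRRinv]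
    rw [this, ← hRsym]
    exact hRpos (Rinv z)
  have hPpos : ∀ x : H, 0 ≤ (inner ℂ (P x) x : ℂ).re := by
    intro x
    have hx : (inner ℂ (P x) x : ℂ) = inner ℂ (K x) (Rinv (K x)) := by
      rw [hPapp]
      calc (inner ℂ (J (Rinv (K x))) x : ℂ)
          = inner ℂ (J (Rinv (K x))) (J (K x)) := by rw [hJK]
      _ = inner ℂ (K x) (Rinv (K x)) := hJinner _ _
    rw [hx, ← inner_conj_symm, Complex.conj_re]
    exact hRinvPos (K x)
  -- R² = P²
  have hsq : R ^ 2 = P ^ 2 := by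
    have hform : ∀ x : H, (inner ℂ ((R ^ 2) x) x : ℂ) = inner ℂ ((P ^ 2) x) x := by
      intro x
      have hRx : ((R ^ 2) x : H) = R (R x) := by rw [sq]; rfl
      have hPx : ((P ^ 2) x : H) = P (P x) := by rw [sq]; rfl
      rw [hRx, hPx, hRsym, hPsym, inner_self_eq_norm_sq_to_K, inner_self_eq_norm_sq_to_K,
        hPnorm]
    have hlin : ((P ^ 2 : H →L[ℂ] H) : H →ₗ[ℂ] H) = ((R ^ 2 : H →L[ℂ] H) : H →ₗ[ℂ] H) :=
      (ext_inner_map _ _).mp fun x => (hform x).symm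
    ext x
    exact (DFunLike.congr_fun hlin x).symm
  -- conclude R = P by uniqueness of positive square roots
  have hRpos' : 0 ≤ R := (R.nonneg_iff_isPositive).mpr ⟨hR.isSymmetric, fun x => hRpos x⟩
  have hPpos' : 0 ≤ P := (P.nonneg_iff_isPositive).mpr ⟨hPSA.isSymmetric, fun x => hPpos x⟩
  have hRP : R = P := stmt_17_sqrt_unique R P hRpos' hPpos' hsq
  have hPR : ∀ x, J (Rinv (K x)) = R x := fun x => by
    rw [← hPapp, ← hRP]
  have hstar : ∀ z, J (Rinv z) = R (J z) := fun z => by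
    have := hPR (J z)
    rwa [hKJ] at this
  have hJJ : ∀ x, J (J x) = x := by
    intro x
    have h2 : R (J (R x)) = J x := by
      have := hstar (R x)
      rw [hRinvR x] at this
      exact this.symm
    have h := hT x
    rw [h2] at h
    exact h
  refine ⟨hJJ, ?_⟩
  intro x
  have hKeq : ∀ y, K y = J y := fun y => hJinj (by rw [hJK, hJJ])
  have hRinvJ : ∀ y, Rinv (J y) = J (R y) := fun y => by
    rw [hTT y, hKeq]
  have h2 : ((Rinv ^ 2) (J x) : H) = Rinv (Rinv (J x)) := by rw [sq]; rfl
  rw [h2, hRinvJ x, hRinvJ (R x), hJJ]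
  rw [sq]; rfl
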